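/- Let B ∈ ℂ^{m×n}, W ∈ ℂ^{n×m}, let k be a natural number with k = ind(BW), let H be the Moore–Penrose inverse of B, and let X be a minimal rank W-weighted weak Drazin inverse of B. Then a matrix Y ∈ ℂ^{n×m} satisfies Y·(B·W)^{k+1} = H·(B·W)^{k+1} if and only if there exists Z ∈ ℂ^{n×m} such that Y = H + Z·(I − B·W·X·W). -/
import Mathlib


open Matrix

/-- The index of a square complex matrix: the least `j` with `rank (M^j) = rank (M^(j+1))`. -/
noncomputable def matIndex {p : ℕ} (M : Matrix (Fin p) (Fin p) ℂ) : ℕ :=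
  sInf {j : ℕ | (M ^ j).rank = (M ^ (j + 1)).rank}

/-- The column space of a complex matrix: the range of `v ↦ M *ᵥ v`. -/
noncomputable def colSpace {a b : ℕ} (M : Matrix (Fin a) (Fin b) ℂ) :
    Submodule ℂ (Fin a → ℂ) :=
  LinearMap.range M.mulVecLin

/-- The null space of a complex matrix: the kernel of `v ↦ M *ᵥ v`. -/
noncomputable def nullSpace {a b : ℕ} (M : Matrix (Fin a) (Fin b) ℂ) :
    Submodule ℂ (Fin b → ℂ) :=
  LinearMap.ker M.mulVecLin

/-- If the column space of `X` is contained in that of `M`, then `X = M * V` for some `V`. -/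
lemma exists_factor_of_range_le {a b c : ℕ} (M : Matrix (Fin a) (Fin b) ℂ)
    (X : Matrix (Fin a) (Fin c) ℂ)
    (h : LinearMap.range X.mulVecLin ≤ LinearMap.range M.mulVecLin) :
    ∃ V : Matrix (Fin b) (Fin c) ℂ, M * V = X := by
  have hcol : ∀ j : Fin c, ∃ v : Fin b → ℂ, M.mulVecLin v = X.mulVecLin (Pi.single j 1) :=
    fun j => h ⟨Pi.single j 1, rfl⟩
  choose v hv using hcol
  refine ⟨Matrix.of fun i j => v j i, ?_⟩
  ext i j
  have := congrFun (hv j) i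
  simp only [Matrix.mulVecLin_apply, Matrix.mulVec_single, mul_one] at this
  rw [Matrix.mul_apply]
  simpa [Matrix.mulVec, dotProduct] using this

/-- **Lemma 3.14.** The general solution of `Y·(B·W)^(k+1) = H·(B·W)^(k+1)` is
`Y = H + Z·(I − B·W·X·W)`. -/
theorem weighted_weak_MPD_general_solution {m n : ℕ}
    (B : Matrix (Fin m) (Fin n) ℂ) (W : Matrix (Fin n) (Fin m) ℂ)
    (k : ℕ) (hk : k = matIndex (B * W))
    (H : Matrix (Fin n) (Fin m) ℂ)
    (hH1 : B * H * B = B) (hH2 : H * B * H = H)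
    (hH3 : (B * H)ᴴ = B * H) (hH4 : (H * B)ᴴ = H * B)
    (X : Matrix (Fin m) (Fin n) ℂ)
    (hX1 : X * W * (B * W) ^ (k + 1) = (B * W) ^ k)
    (hX2 : X.rank = ((B * W) ^ k).rank)
    (Y : Matrix (Fin n) (Fin m) ℂ) :
    Y * (B * W) ^ (k + 1) = H * (B * W) ^ (k + 1) ↔
      ∃ Z : Matrix (Fin n) (Fin m) ℂ, Y = H + Z * (1 - B * W * X * W) := by
  constructor
  · intro hY
    -- range of (B*W)^k is contained in range of X
    have hle1 : LinearMap.range ((B * W) ^ k).mulVecLin ≤ LinearMap.range X.mulVecLin := by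
      rw [← hX1, Matrix.mul_assoc, Matrix.mulVecLin_mul]
      exact LinearMap.range_comp_le_range _ _
    -- equal ranks give equality of ranges, hence the reverse inclusion
    have heq : LinearMap.range ((B * W) ^ k).mulVecLin = LinearMap.range X.mulVecLin :=
      Submodule.eq_of_le_of_finrank_le hle1 (le_of_eq hX2)
    obtain ⟨V, hV⟩ := exists_factor_of_range_le ((B * W) ^ k) X heq.ge
    refine ⟨Y - H, ?_⟩
    have h0 : (Y - H) * (B * W) ^ (k + 1) = 0 := by
      rw [Matrix.sub_mul, hY, sub_self]
    have hx : B * W * X * W = (B * W) ^ (k + 1) * (V * W) := by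
      rw [← hV, pow_succ']
      simp only [Matrix.mul_assoc]
    rw [Matrix.mul_sub, Matrix.mul_one, hx, ← Matrix.mul_assoc, h0, Matrix.zero_mul,
      sub_zero, add_sub_cancel]
  · rintro ⟨Z, rfl⟩
    have h0 : (1 - B * W * X * W) * (B * W) ^ (k + 1) = 0 := by
      have hkey : B * W * X * W * (B * W) ^ (k + 1) = (B * W) ^ (k + 1) := by
        calc B * W * X * W * (B * W) ^ (k + 1)
            = B * W * (X * W * (B * W) ^ (k + 1)) := by simp only [Matrix.mul_assoc]
          _ = B * W * (B * W) ^ k := by rw [hX1]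
          _ = (B * W) ^ (k + 1) := (pow_succ' _ _).symm
      rw [Matrix.sub_mul, Matrix.one_mul, hkey, sub_self]
    rw [Matrix.add_mul, Matrix.mul_assoc, h0, Matrix.mul_zero, add_zero]
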